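/- arXiv:1809.06602 — 2 statements merged into one kernel-verified Lean document; each statement's English description precedes it below -/
import Mathlib

section
/- Let ψ be a nonnegative function on (0,∞) that is quasi-decreasing, i.e., there is a constant C > 0 such that ψ(t₁) ≤ C ψ(t₂) whenever 0 < t₂ < t₁. Suppose α > 0, β > -1, and 0 < p < 1. Then ∫₀^∞ u^{-α-1} (∫₀^u ψ(t) t^β dt)^p du ≤ c ∫₀^∞ u^{-α-1} (ψ(u) u^{β+1})^p du, where c depends only on C, α, β, p. -/
open MeasureTheory ENNReal Set
noncomputable section

private lemma my_finset_rpow_le {p : ℝ} (hp0 : 0 < p) (hp1 : p ≤ 1) (f : ℕ → ℝ≥0∞)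
    (s : Finset ℕ) : (∑ i ∈ s, f i) ^ p ≤ ∑ i ∈ s, f i ^ p := by
  classical
  induction s using Finset.induction_on with
  | empty => simp [ENNReal.zero_rpow_of_pos hp0]
  | insert _ _ h ih =>
    rw [Finset.sum_insert h, Finset.sum_insert h]
    exact le_trans (ENNReal.rpow_add_le_add_rpow _ _ hp0.le hp1) (by gcongr)

private lemma my_tsum_rpow_le {p : ℝ} (hp0 : 0 < p) (hp1 : p ≤ 1) (f : ℕ → ℝ≥0∞) :
    (∑' i, f i) ^ p ≤ ∑' i, f i ^ p := by
  have h : ∑' i, f i ≤ (∑' i, f i ^ p) ^ p⁻¹ := by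
    rw [ENNReal.tsum_eq_iSup_sum]
    refine iSup_le fun s => ?_
    rw [← ENNReal.rpow_le_rpow_iff hp0, ENNReal.rpow_inv_rpow hp0.ne']
    exact (my_finset_rpow_le hp0 hp1 f s).trans (ENNReal.sum_le_tsum s)
  calc (∑' i, f i) ^ p ≤ ((∑' i, f i ^ p) ^ p⁻¹) ^ p := ENNReal.rpow_le_rpow h hp0.le
    _ = ∑' i, f i ^ p := ENNReal.rpow_inv_rpow hp0.ne' _

private lemma my_lintegral_Ioi_mul_left {c : ℝ} (hc : 0 < c) (f : ℝ → ℝ≥0∞)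
    (hf : Measurable f) :
    ∫⁻ u in Ioi (0:ℝ), f (c * u) = ENNReal.ofReal c⁻¹ * ∫⁻ v in Ioi (0:ℝ), f v := by
  have h1 : ∀ u : ℝ, (Ioi (0:ℝ)).indicator (fun u => f (c * u)) u
      = (Ioi (0:ℝ)).indicator f (c * u) := by
    intro u
    by_cases hu : 0 < u
    · rw [indicator_of_mem (mem_Ioi.2 hu), indicator_of_mem (mem_Ioi.2 (by positivity))]
    · rw [indicator_of_notMem (by simpa using hu), indicator_of_notMem]
      simp only [mem_Ioi, not_lt]
      push_neg at hu
      exact mul_nonpos_of_nonneg_of_nonpos hc.le (by simpa using hu)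
  rw [← lintegral_indicator measurableSet_Ioi, ← lintegral_indicator measurableSet_Ioi]
  simp_rw [h1]
  rw [← lintegral_map (hf.indicator measurableSet_Ioi) (measurable_const_mul c),
    Real.map_volume_mul_left hc.ne', lintegral_smul_measure, abs_of_pos (inv_pos.2 hc), smul_eq_mul]

private lemma my_cover {u : ℝ} (hu : 0 < u) :
    Ioc (0:ℝ) u = ⋃ k : ℕ, Ioc (u / 2 ^ (k+1)) (u / 2 ^ k) := by
  ext t
  simp only [mem_Ioc, mem_iUnion]
  constructor
  · rintro ⟨ht0, htu⟩
    have hex : ∃ k : ℕ, u / 2 ^ (k+1) < t := by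
      obtain ⟨n, hn⟩ := pow_unbounded_of_one_lt (u / t) (one_lt_two (α := ℝ))
      refine ⟨n, ?_⟩
      rw [div_lt_iff₀ (by positivity)]
      rw [div_lt_iff₀ ht0] at hn
      calc u < 2 ^ n * t := hn
        _ ≤ t * 2 ^ (n+1) := by
            rw [mul_comm]
            gcongr
            exact one_le_two
            omega
    refine ⟨Nat.find hex, Nat.find_spec hex, ?_⟩
    rcases Nat.eq_zero_or_pos (Nat.find hex) with h0 | h0
    · rw [h0]; simpa using htu
    · have hmin := Nat.find_min hex (Nat.pred_lt h0.ne')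
      push_neg at hmin
      rwa [show (Nat.find hex).pred + 1 = Nat.find hex from Nat.succ_pred_eq_of_pos h0] at hmin
  · rintro ⟨k, h1, h2⟩
    refine ⟨lt_of_le_of_lt (by positivity) h1, h2.trans ?_⟩
    exact div_le_self hu.le (one_le_pow₀ one_le_two)

private lemma my_disjoint {u : ℝ} (hu : 0 < u) :
    Pairwise (Function.onFun Disjoint fun k : ℕ => Ioc (u / 2 ^ (k+1)) (u / 2 ^ k)) := by
  have key : ∀ i j : ℕ, i < j →
      Disjoint (Ioc (u / 2 ^ (i+1)) (u / 2 ^ i)) (Ioc (u / 2 ^ (j+1)) (u / 2 ^ j)) := by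
    intro i j hij
    rw [Set.disjoint_right]
    rintro x ⟨hx1, hx2⟩ ⟨hx3, _⟩
    have : u / 2 ^ j ≤ u / 2 ^ (i+1) := by
      gcongr
      exact one_le_two
      omega
    exact absurd (hx2.trans this) (not_le.2 hx3)
  intro i j hij
  rcases hij.lt_or_gt with h | h
  · exact key i j h
  · exact (key j i h).symm

private lemma my_chunk {C β : ℝ} (hC : 0 < C) (ψ : ℝ → ℝ) (hpos : ∀ t ∈ Ioi (0:ℝ), 0 ≤ ψ t)
    (hqd : ∀ t₁ t₂ : ℝ, 0 < t₂ → t₂ < t₁ → ψ t₁ ≤ C * ψ t₂) {a : ℝ} (ha : 0 < a) :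
    ∫⁻ t in Ioc a (2*a), ENNReal.ofReal (ψ t * t ^ β) ≤
      ENNReal.ofReal (C * max 1 ((2:ℝ) ^ β)) * ENNReal.ofReal (ψ a * a ^ (β + 1)) := by
  set B := max 1 ((2:ℝ) ^ β) with hBdef
  have hB2 : (2:ℝ) ^ β ≤ B := le_max_right _ _
  have hB1 : (1:ℝ) ≤ B := le_max_left _ _
  have hBpos : 0 < B := lt_of_lt_of_le one_pos hB1
  have hψa : 0 ≤ ψ a := hpos a ha
  have hptwise : ∀ t ∈ Ioc a (2*a), ψ t * t ^ β ≤ C * B * (ψ a * a ^ β) := by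
    rintro t ⟨hat, ht2a⟩
    have ht0 : 0 < t := ha.trans hat
    have h1 : ψ t ≤ C * ψ a := hqd t a ha hat
    have h2 : t ^ β ≤ B * a ^ β := by
      rcases le_or_gt 0 β with hβ | hβ
      · calc t ^ β ≤ (2*a) ^ β := Real.rpow_le_rpow ht0.le ht2a hβ
          _ = 2 ^ β * a ^ β := Real.mul_rpow (by norm_num) ha.le
          _ ≤ B * a ^ β := by gcongr
      · calc t ^ β ≤ a ^ β := Real.rpow_le_rpow_of_nonpos ha hat.le hβ.le
          _ ≤ B * a ^ β := by nlinarith [Real.rpow_nonneg ha.le β]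
    calc ψ t * t ^ β ≤ (C * ψ a) * (B * a ^ β) := by
          apply mul_le_mul h1 h2 (Real.rpow_nonneg ht0.le β)
          positivity
      _ = C * B * (ψ a * a ^ β) := by ring
  calc ∫⁻ t in Ioc a (2*a), ENNReal.ofReal (ψ t * t ^ β)
      ≤ ∫⁻ _ in Ioc a (2*a), ENNReal.ofReal (C * B * (ψ a * a ^ β)) := by
        apply setLIntegral_mono' measurableSet_Ioc
        intro t ht
        exact ENNReal.ofReal_le_ofReal (hptwise t ht)
    _ = ENNReal.ofReal (C * B * (ψ a * a ^ β)) * volume (Ioc a (2*a)) :=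
        setLIntegral_const _ _
    _ = ENNReal.ofReal (C * B * (ψ a * a ^ β)) * ENNReal.ofReal a := by
        rw [Real.volume_Ioc]; ring_nf
    _ = ENNReal.ofReal (C * B * (ψ a * a ^ β) * a) := by
        rw [← ENNReal.ofReal_mul (by positivity)]
    _ = ENNReal.ofReal (C * B * (ψ a * a ^ (β+1))) := by
        rw [Real.rpow_add_one ha.ne']; ring_nf
    _ = ENNReal.ofReal (C * B) * ENNReal.ofReal (ψ a * a ^ (β + 1)) := by
        rw [← ENNReal.ofReal_mul (by positivity), mul_assoc]

/-- Hardy-type inequality for quasi-decreasing functions (Proposition 2.2). -/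
theorem hardy_type_quasi_decreasing (C α β p : ℝ) (hC : 0 < C) (hα : 0 < α)
    (hβ : -1 < β) (hp0 : 0 < p) (hp1 : p < 1) :
    ∃ c > 0, ∀ ψ : ℝ → ℝ, Measurable ψ → (∀ t ∈ Set.Ioi (0:ℝ), 0 ≤ ψ t) →
      (∀ t₁ t₂ : ℝ, 0 < t₂ → t₂ < t₁ → ψ t₁ ≤ C * ψ t₂) →
      ∫⁻ u in Set.Ioi (0:ℝ), ENNReal.ofReal (u ^ (-α - 1)) *
          (∫⁻ t in Set.Ioc (0:ℝ) u, ENNReal.ofReal (ψ t * t ^ β)) ^ p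
        ≤ ENNReal.ofReal c * ∫⁻ u in Set.Ioi (0:ℝ),
            ENNReal.ofReal (u ^ (-α - 1)) * ENNReal.ofReal (ψ u * u ^ (β + 1)) ^ p := by
  set B := max 1 ((2:ℝ) ^ β) with hBdef
  set K := C * B with hKdef
  have hBpos : 0 < B := lt_of_lt_of_le one_pos (le_max_left _ _)
  have hK : 0 < K := mul_pos hC hBpos
  set r := (2:ℝ) ^ (-α) with hrdef
  have hr0 : 0 < r := Real.rpow_pos_of_pos two_pos _
  have hr1 : r < 1 := Real.rpow_lt_one_of_one_lt_of_neg one_lt_two (by linarith)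
  have h1r : 0 < 1 - r := by linarith
  refine ⟨K ^ p * (r / (1 - r)),
    mul_pos (Real.rpow_pos_of_pos hK p) (div_pos hr0 h1r), ?_⟩
  intro ψ hm hpos hqd
  set f : ℝ → ℝ≥0∞ := fun v =>
    ENNReal.ofReal (v ^ (-α - 1)) * ENNReal.ofReal (ψ v * v ^ (β + 1)) ^ p with hfdef
  have hfm : Measurable f :=
    ((measurable_id.pow_const (-α - 1)).ennreal_ofReal).mul
      (((hm.mul (measurable_id.pow_const (β + 1))).ennreal_ofReal).pow_const p)
  set I := ∫⁻ v in Ioi (0:ℝ), f v with hIdef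
  -- step 1 : pointwise bound
  have hsum : ∀ u ∈ Ioi (0:ℝ),
      ENNReal.ofReal (u ^ (-α - 1)) *
        (∫⁻ t in Ioc (0:ℝ) u, ENNReal.ofReal (ψ t * t ^ β)) ^ p
      ≤ ∑' k : ℕ, ENNReal.ofReal (u ^ (-α - 1)) * (ENNReal.ofReal K ^ p *
          ENNReal.ofReal (ψ (u / 2 ^ (k+1)) * (u / 2 ^ (k+1)) ^ (β + 1)) ^ p) := by
    intro u hu
    rw [mem_Ioi] at hu
    rw [ENNReal.tsum_mul_left]
    refine mul_le_mul_right ?_ _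
    have hF : (∫⁻ t in Ioc (0:ℝ) u, ENNReal.ofReal (ψ t * t ^ β))
        ≤ ∑' k : ℕ, ENNReal.ofReal K *
            ENNReal.ofReal (ψ (u / 2 ^ (k+1)) * (u / 2 ^ (k+1)) ^ (β + 1)) := by
      rw [my_cover hu, lintegral_iUnion (fun k => measurableSet_Ioc) (my_disjoint hu)]
      refine ENNReal.tsum_le_tsum fun k => ?_
      have h2a : u / 2 ^ k = 2 * (u / 2 ^ (k+1)) := by
        rw [pow_succ]
        field_simp
      rw [h2a]
      exact my_chunk hC ψ hpos hqd (by positivity)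
    calc (∫⁻ t in Ioc (0:ℝ) u, ENNReal.ofReal (ψ t * t ^ β)) ^ p
        ≤ (∑' k : ℕ, ENNReal.ofReal K *
            ENNReal.ofReal (ψ (u / 2 ^ (k+1)) * (u / 2 ^ (k+1)) ^ (β + 1))) ^ p :=
          ENNReal.rpow_le_rpow hF hp0.le
      _ ≤ ∑' k : ℕ, (ENNReal.ofReal K *
            ENNReal.ofReal (ψ (u / 2 ^ (k+1)) * (u / 2 ^ (k+1)) ^ (β + 1))) ^ p :=
          my_tsum_rpow_le hp0 hp1.le _
      _ = ∑' k : ℕ, ENNReal.ofReal K ^ p *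
            ENNReal.ofReal (ψ (u / 2 ^ (k+1)) * (u / 2 ^ (k+1)) ^ (β + 1)) ^ p :=
          tsum_congr fun k => ENNReal.mul_rpow_of_nonneg _ _ hp0.le
  -- step 2 : integrate and swap
  have hgm : ∀ k : ℕ, Measurable fun u : ℝ =>
      ENNReal.ofReal (u ^ (-α - 1)) * (ENNReal.ofReal K ^ p *
        ENNReal.ofReal (ψ (u / 2 ^ (k+1)) * (u / 2 ^ (k+1)) ^ (β + 1)) ^ p) := by
    intro k
    refine ((measurable_id.pow_const (-α - 1)).ennreal_ofReal).mul (measurable_const.mul ?_)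
    exact (((hm.comp (measurable_id.div_const _)).mul
      ((measurable_id.div_const _).pow_const (β + 1))).ennreal_ofReal).pow_const p
  -- step 3 : evaluate each integral by change of variables
  have heval : ∀ k : ℕ,
      (∫⁻ u in Ioi (0:ℝ), ENNReal.ofReal (u ^ (-α - 1)) * (ENNReal.ofReal K ^ p *
        ENNReal.ofReal (ψ (u / 2 ^ (k+1)) * (u / 2 ^ (k+1)) ^ (β + 1)) ^ p))
      = ENNReal.ofReal K ^ p * (ENNReal.ofReal (r ^ (k+1)) * I) := by
    intro k
    set c : ℝ := ((2:ℝ) ^ (k+1))⁻¹ with hcdef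
    have hc : 0 < c := by positivity
    have hcu : ∀ u : ℝ, u / 2 ^ (k+1) = c * u := fun u => by
      rw [hcdef, div_eq_inv_mul]
    have hcr : c ^ α = r ^ (k+1) := by
      rw [hcdef, hrdef, ← Real.rpow_natCast ((2:ℝ) ^ (-α)) (k+1),
        ← Real.rpow_natCast (2:ℝ) (k+1), ← Real.rpow_neg (by norm_num : (0:ℝ) ≤ 2),
        ← Real.rpow_mul (by norm_num : (0:ℝ) ≤ 2), ← Real.rpow_mul (by norm_num : (0:ℝ) ≤ 2)]
      ring_nf
    calc (∫⁻ u in Ioi (0:ℝ), ENNReal.ofReal (u ^ (-α - 1)) * (ENNReal.ofReal K ^ p *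
          ENNReal.ofReal (ψ (u / 2 ^ (k+1)) * (u / 2 ^ (k+1)) ^ (β + 1)) ^ p))
        = ∫⁻ u in Ioi (0:ℝ), ENNReal.ofReal K ^ p *
            (ENNReal.ofReal (c ^ (α + 1)) * f (c * u)) := by
          refine setLIntegral_congr_fun measurableSet_Ioi (fun u hu => ?_)
          rw [mem_Ioi] at hu
          have hkey : ENNReal.ofReal (u ^ (-α - 1))
              = ENNReal.ofReal (c ^ (α + 1)) * ENNReal.ofReal ((c * u) ^ (-α - 1)) := by
            rw [← ENNReal.ofReal_mul (by positivity)]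
            congr 1
            rw [Real.mul_rpow hc.le hu.le, ← mul_assoc, ← Real.rpow_add hc]
            norm_num
          rw [hcu u, hfdef]
          simp only []
          rw [hkey]
          ring
      _ = ENNReal.ofReal K ^ p * (ENNReal.ofReal (c ^ (α + 1)) *
            ∫⁻ u in Ioi (0:ℝ), f (c * u)) := by
          have hmc : Measurable fun u : ℝ => f (c * u) := hfm.comp (measurable_const_mul c)
          rw [lintegral_const_mul _ (hmc.const_mul _), lintegral_const_mul _ hmc]
      _ = ENNReal.ofReal K ^ p * (ENNReal.ofReal (c ^ (α + 1)) *
            (ENNReal.ofReal c⁻¹ * I)) := by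
          rw [my_lintegral_Ioi_mul_left hc f hfm]
      _ = ENNReal.ofReal K ^ p * (ENNReal.ofReal (r ^ (k+1)) * I) := by
          rw [← mul_assoc (ENNReal.ofReal (c ^ (α + 1)))]
          congr 2
          rw [← ENNReal.ofReal_mul (by positivity)]
          congr 1
          rw [← Real.rpow_neg_one c, ← Real.rpow_add hc, ← hcr]
          norm_num
  -- put everything together
  calc ∫⁻ u in Ioi (0:ℝ), ENNReal.ofReal (u ^ (-α - 1)) *
        (∫⁻ t in Ioc (0:ℝ) u, ENNReal.ofReal (ψ t * t ^ β)) ^ p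
      ≤ ∫⁻ u in Ioi (0:ℝ), ∑' k : ℕ, ENNReal.ofReal (u ^ (-α - 1)) *
          (ENNReal.ofReal K ^ p *
            ENNReal.ofReal (ψ (u / 2 ^ (k+1)) * (u / 2 ^ (k+1)) ^ (β + 1)) ^ p) := by
        refine setLIntegral_mono' measurableSet_Ioi fun u hu => ?_
        have := hsum u hu
        rwa [ENNReal.tsum_mul_left] at this ⊢
      _ = ∑' k : ℕ, ∫⁻ u in Ioi (0:ℝ), ENNReal.ofReal (u ^ (-α - 1)) *
          (ENNReal.ofReal K ^ p *
            ENNReal.ofReal (ψ (u / 2 ^ (k+1)) * (u / 2 ^ (k+1)) ^ (β + 1)) ^ p) :=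
        lintegral_tsum fun k => (hgm k).aemeasurable
      _ = ∑' k : ℕ, ENNReal.ofReal K ^ p * (ENNReal.ofReal (r ^ (k+1)) * I) :=
        tsum_congr heval
      _ = ENNReal.ofReal K ^ p * ((∑' k : ℕ, ENNReal.ofReal (r ^ (k+1))) * I) := by
        rw [ENNReal.tsum_mul_left, ENNReal.tsum_mul_right]
      _ = ENNReal.ofReal (K ^ p * (r / (1 - r))) * I := by
        have hsummable : Summable fun k : ℕ => r ^ (k+1) := by
          have : (fun k : ℕ => r ^ (k+1)) = fun k : ℕ => r * r ^ k :=
            funext fun k => pow_succ' r k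
          rw [this]
          exact (summable_geometric_of_lt_one hr0.le hr1).mul_left r
        have htsum : ∑' k : ℕ, r ^ (k+1) = r / (1 - r) := by
          have : (fun k : ℕ => r ^ (k+1)) = fun k : ℕ => r * r ^ k :=
            funext fun k => pow_succ' r k
          rw [this, tsum_mul_left, tsum_geometric_of_lt_one hr0.le hr1, div_eq_mul_inv]
        have hscal : ENNReal.ofReal K ^ p * ENNReal.ofReal (r / (1 - r))
            = ENNReal.ofReal (K ^ p * (r / (1 - r))) := by
          rw [ENNReal.ofReal_rpow_of_nonneg hK.le hp0.le,
            ← ENNReal.ofReal_mul (by positivity)]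
        rw [← ENNReal.ofReal_tsum_of_nonneg (fun k => by positivity) hsummable, htsum,
          ← hscal]
        ring
end
end

section
/- Let φ ∈ L^p(ℝ) with 1 ≤ p < ∞. Then for every t > 0, φ**(t) - φ*(t) ≤ 2 t^{-1/p} ω(φ; t)_p, where ω(φ; t)_p = sup_{|h| ≤ t} ‖φ(·+h) - φ(·)‖_p is the modulus of continuity in L^p. -/
open MeasureTheory ENNReal Set
noncomputable section

/-- Nonincreasing rearrangement of an `ℝ≥0∞`-valued function. -/
def rearr {α : Type*} [MeasurableSpace α] (μ : Measure α) (f : α → ℝ≥0∞) (t : ℝ) : ℝ≥0∞ :=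
  sInf {y : ℝ≥0∞ | μ {x | y < f x} ≤ ENNReal.ofReal t}

/-- Nonincreasing rearrangement of a real-valued function. -/
def rearrR {α : Type*} [MeasurableSpace α] (μ : Measure α) (f : α → ℝ) (t : ℝ) : ℝ≥0∞ :=
  rearr μ (fun x => (‖f x‖₊ : ℝ≥0∞)) t

/-- The maximal function `f**(t) = t⁻¹ ∫₀ᵗ f*(u) du`. -/
def rearr2 {α : Type*} [MeasurableSpace α] (μ : Measure α) (f : α → ℝ≥0∞) (t : ℝ) : ℝ≥0∞ :=
  (∫⁻ u in Set.Ioc (0:ℝ) t, rearr μ f u) / ENNReal.ofReal t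

/-- L^p modulus of continuity ω(φ;t)_p = sup_{|h| ≤ t} ‖φ(·+h) − φ‖_p. -/
def omegaMod (φ : ℝ → ℝ) (p : ℝ≥0∞) (t : ℝ) : ℝ≥0∞ :=
  ⨆ (h : ℝ) (_ : |h| ≤ t), eLpNorm (fun x => φ (x + h) - φ x) p volume


lemma my_key (c : ℝ≥0∞) :
    (∫⁻ s in Ioi (0:ℝ), (if ENNReal.ofReal s < c then (1:ℝ≥0∞) else 0)) = c := by
  rcases eq_or_ne c ∞ with rfl | hc
  · simp only [ENNReal.ofReal_lt_top, if_true]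
    rw [setLIntegral_const]
    simp [Real.volume_Ioi]
  · have heq : ∀ s ∈ Ioi (0:ℝ),
        (if ENNReal.ofReal s < c then (1:ℝ≥0∞) else 0)
          = (Iio c.toReal).indicator (fun _ => (1:ℝ≥0∞)) s := by
      intro s hs
      have : ENNReal.ofReal s < c ↔ s < c.toReal :=
        ENNReal.ofReal_lt_iff_lt_toReal (le_of_lt hs) hc
      by_cases h : s < c.toReal
      · simp [Set.indicator_of_mem (show s ∈ Iio c.toReal from h), this, h]
      · simp [Set.indicator_of_notMem (show s ∉ Iio c.toReal from h), this, h]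
    rw [setLIntegral_congr_fun measurableSet_Ioi
      heq]
    rw [lintegral_indicator measurableSet_Iio, Measure.restrict_restrict measurableSet_Iio]
    have : Iio c.toReal ∩ Ioi (0:ℝ) = Ioo 0 c.toReal := by
      ext x; simp [mem_Ioo, and_comm]
    rw [this]
    simp [Real.volume_Ioo, ENNReal.ofReal_toReal hc]

lemma my_layercake {α : Type*} [MeasurableSpace α] (μ : Measure α) [SFinite μ]
    {g : α → ℝ≥0∞} (hg : Measurable g) :
    ∫⁻ x, g x ∂μ = ∫⁻ s in Ioi (0:ℝ), μ {x | ENNReal.ofReal s < g x} := by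
  have h1 : ∀ x, g x = ∫⁻ s in Ioi (0:ℝ), (if ENNReal.ofReal s < g x then (1:ℝ≥0∞) else 0) :=
    fun x => (my_key (g x)).symm
  calc ∫⁻ x, g x ∂μ
      = ∫⁻ x, (∫⁻ s in Ioi (0:ℝ), (if ENNReal.ofReal s < g x then (1:ℝ≥0∞) else 0)) ∂μ := by
        exact lintegral_congr h1
    _ = ∫⁻ s in Ioi (0:ℝ), (∫⁻ x, (if ENNReal.ofReal s < g x then (1:ℝ≥0∞) else 0) ∂μ) := by
        refine lintegral_lintegral_swap ?_
        refine Measurable.aemeasurable ?_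
        have hset : MeasurableSet {p : α × ℝ | ENNReal.ofReal p.2 < g p.1} :=
          measurableSet_lt (ENNReal.measurable_ofReal.comp measurable_snd)
            (hg.comp measurable_fst)
        exact Measurable.ite hset measurable_const measurable_const
    _ = ∫⁻ s in Ioi (0:ℝ), μ {x | ENNReal.ofReal s < g x} := by
        refine setLIntegral_congr_fun measurableSet_Ioi ?_
        intro s _
        dsimp only
        have hms : MeasurableSet {x | ENNReal.ofReal s < g x} :=
          measurableSet_lt measurable_const hg
        rw [← lintegral_indicator_one hms]
        apply lintegral_congr
        intro x
        by_cases h : ENNReal.ofReal s < g x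
        · simp [Set.indicator_of_mem (show x ∈ {x | ENNReal.ofReal s < g x} from h), h]
        · simp [Set.indicator_of_notMem (show x ∉ {x | ENNReal.ofReal s < g x} from h), h]

lemma rearr_anti {α : Type*} [MeasurableSpace α] (μ : Measure α) (f : α → ℝ≥0∞) :
    Antitone (rearr μ f) := by
  intro a b hab
  exact sInf_le_sInf (fun y hy => le_trans hy (ENNReal.ofReal_le_ofReal hab))

lemma meas_rearr_le {α : Type*} [MeasurableSpace α] (μ : Measure α) (f : α → ℝ≥0∞) (t : ℝ)
    (hB : rearr μ f t ≠ ∞) :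
    μ {x | rearr μ f t < f x} ≤ ENNReal.ofReal t := by
  set B := rearr μ f t with hBdef
  have hSne : ∀ n : ℕ, ∃ y, (μ {x | y < f x} ≤ ENNReal.ofReal t) ∧ y < B + (n : ℝ≥0∞)⁻¹ := by
    intro n
    have hlt : B < B + (n : ℝ≥0∞)⁻¹ :=
      ENNReal.lt_add_right hB (ENNReal.inv_ne_zero.mpr (ENNReal.natCast_ne_top n))
    have h2 : sInf {y : ℝ≥0∞ | μ {x | y < f x} ≤ ENNReal.ofReal t} < B + (n : ℝ≥0∞)⁻¹ := hlt
    obtain ⟨y, hy1, hy2⟩ := sInf_lt_iff.mp h2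
    exact ⟨y, hy1, hy2⟩
  choose z hz1 hz2 using hSne
  have hzB : ∀ n, B ≤ z n := fun n => sInf_le (hz1 n)
  have hunion : {x | B < f x} = ⋃ n : ℕ, {x | z n < f x} := by
    ext x
    simp only [mem_setOf_eq, mem_iUnion]
    constructor
    · intro hx
      have h0 : f x - B ≠ 0 := by
        rw [← pos_iff_ne_zero]
        exact tsub_pos_iff_lt.mpr hx
      obtain ⟨n, hn⟩ := ENNReal.exists_inv_nat_lt h0
      refine ⟨n, lt_of_lt_of_le (hz2 n) ?_⟩
      calc B + (n : ℝ≥0∞)⁻¹ ≤ B + (f x - B) := add_le_add le_rfl hn.le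
        _ = f x := add_tsub_cancel_of_le hx.le
    · rintro ⟨n, hn⟩
      exact lt_of_le_of_lt (hzB n) hn
  rw [hunion]
  have hdir : Directed (· ⊆ ·) (fun n : ℕ => {x | z n < f x}) := by
    intro m n
    rcases le_total (z m) (z n) with h | h
    · exact ⟨m, subset_rfl, fun x hx => lt_of_le_of_lt h hx⟩
    · exact ⟨n, fun x hx => lt_of_le_of_lt h hx, subset_rfl⟩
  rw [hdir.measure_iUnion]
  exact iSup_le hz1

lemma vol_rearr_gt_le {α : Type*} [MeasurableSpace α] (μ : Measure α) (f : α → ℝ≥0∞)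
    (t : ℝ) (y : ℝ≥0∞) :
    volume ({u : ℝ | y < rearr μ f u} ∩ Ioc 0 t) ≤ μ {x | y < f x} := by
  rcases eq_or_ne (μ {x | y < f x}) ∞ with h | h
  · simp [h]
  · refine le_trans (measure_mono (?_ : _ ⊆ Ioo (0:ℝ) (μ {x | y < f x}).toReal)) ?_
    · rintro u ⟨hu1, hu2, _⟩
      refine ⟨hu2, ?_⟩
      have h3 : ¬ (μ {x | y < f x} ≤ ENNReal.ofReal u) := by
        intro hle
        have h4 : rearr μ f u ≤ y := sInf_le hle
        exact absurd h4 (not_le.mpr hu1)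
      exact (ENNReal.ofReal_lt_iff_lt_toReal hu2.le h).mp (not_le.mp h3)
    · rw [Real.volume_Ioo, sub_zero]
      simp [ENNReal.ofReal_toReal h]

/-- Ul'yanov's estimate: φ**(t) − φ*(t) ≤ 2 t^{-1/p} ω(φ;t)_p. -/
theorem ulyanov_estimate (p : ℝ) (hp : 1 ≤ p) (φ : ℝ → ℝ)
    (hφ : MemLp φ (ENNReal.ofReal p) volume) (t : ℝ) (ht : 0 < t) :
    rearr2 volume (fun x => (‖φ x‖₊ : ℝ≥0∞)) t - rearrR volume φ t
      ≤ 2 * ENNReal.ofReal (t ^ (-(1/p))) * omegaMod φ (ENNReal.ofReal p) t := by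
  set q := ENNReal.ofReal p with hq
  obtain ⟨ψ, hψm, hae⟩ : ∃ ψ : ℝ → ℝ, StronglyMeasurable ψ ∧ φ =ᵐ[volume] ψ :=
    ⟨hφ.1.mk φ, hφ.1.stronglyMeasurable_mk, hφ.1.ae_eq_mk⟩
  have hψ : Measurable ψ := hψm.measurable
  set f : ℝ → ℝ≥0∞ := fun x => (‖ψ x‖₊ : ℝ≥0∞) with hfdef
  have hfm : Measurable f := hψ.nnnorm.coe_nnreal_ennreal
  have hsets : ∀ y : ℝ≥0∞, volume {x | y < (‖φ x‖₊ : ℝ≥0∞)} = volume {x | y < f x} := by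
    intro y
    apply measure_congr
    filter_upwards [hae] with x hx
    have : (y < (‖φ x‖₊ : ℝ≥0∞)) = (y < (‖ψ x‖₊ : ℝ≥0∞)) := by rw [hx]
    exact this
  have hrearr : ∀ u : ℝ, rearrR volume φ u = rearr volume f u := by
    intro u
    unfold rearrR rearr
    congr 1
    ext y
    simp only [Set.mem_setOf_eq, hsets y]
  have hrearr2 : rearr2 volume (fun x => (‖φ x‖₊ : ℝ≥0∞)) t = rearr2 volume f t := by
    unfold rearr2
    congr 1
    exact lintegral_congr fun u => hrearr u
  rw [hrearr2, hrearr t]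
  set B := rearr volume f t with hBdef
  rcases eq_or_ne B ∞ with hB | hB
  · simp [hB]
  have homega : ∀ h : ℝ, |h| ≤ t →
      eLpNorm (fun x => ψ (x + h) - ψ x) q volume ≤ omegaMod φ q t := by
    intro h hh
    have htr : ∀ᵐ x ∂(volume : Measure ℝ), φ (x + h) = ψ (x + h) :=
      (measurePreserving_add_right (volume : Measure ℝ) h).quasiMeasurePreserving.ae hae
    have hcong : eLpNorm (fun x => ψ (x + h) - ψ x) q volume
        = eLpNorm (fun x => φ (x + h) - φ x) q volume := by
      apply eLpNorm_congr_ae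
      filter_upwards [hae, htr] with x hx1 hx2
      rw [← hx2, hx1]
    rw [hcong]
    exact le_iSup₂ (f := fun (h : ℝ) (_ : |h| ≤ t) =>
      eLpNorm (fun x => φ (x + h) - φ x) q volume) h hh
  set τ := ENNReal.ofReal t with hτ
  have hτ0 : τ ≠ 0 := (ENNReal.ofReal_pos.mpr ht).ne'
  have hτtop : τ ≠ ∞ := ENNReal.ofReal_ne_top
  set E := {x : ℝ | B < f x} with hE
  have hEm : MeasurableSet E := measurableSet_lt measurable_const hfm
  have hEμ : volume E ≤ τ := meas_rearr_le volume f t hB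
  set Ω := omegaMod φ q t with hΩ
  set c : ℝ := 1 - 1/p with hc
  have hp0 : (0:ℝ) < p := lt_of_lt_of_le one_pos hp
  have hc0 : 0 ≤ c := by
    rw [hc]
    have h1 : 1/p ≤ 1 := by rw [div_le_one hp0]; exact hp
    linarith
  -- pointwise estimate
  have hpt : ∀ x : ℝ, τ * (f x - B) ≤ ∫⁻ h in Ioc (-t) t, (‖ψ (x + h) - ψ x‖₊ : ℝ≥0∞) := by
    intro x
    set S := Ioc (x - t) (x + t) \ E with hS
    have hSm : MeasurableSet S := measurableSet_Ioc.diff hEm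
    have hSμ : τ ≤ volume S := by
      have h1 : volume (Ioc (x - t) (x + t)) = ENNReal.ofReal (2*t) := by
        rw [Real.volume_Ioc]
        congr 1
        ring
      have h2 : ENNReal.ofReal (2*t) - volume E ≤ volume S := by
        rw [← h1]
        exact le_measure_diff
      refine le_trans ?_ (le_trans (tsub_le_tsub_left hEμ _) h2)
      rw [hτ, ← ENNReal.ofReal_sub _ ht.le]
      apply ENNReal.ofReal_le_ofReal
      linarith
    have hpw : ∀ y ∈ S, f x - B ≤ (‖ψ y - ψ x‖₊ : ℝ≥0∞) := by
      intro y hy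
      have hfy : f y ≤ B := not_lt.mp hy.2
      rw [tsub_le_iff_right]
      have htri : ‖ψ x‖₊ ≤ ‖ψ x - ψ y‖₊ + ‖ψ y‖₊ := by
        have h := nnnorm_add_le (ψ x - ψ y) (ψ y)
        rwa [sub_add_cancel] at h
      calc f x = (‖ψ x‖₊ : ℝ≥0∞) := rfl
        _ ≤ (‖ψ x - ψ y‖₊ : ℝ≥0∞) + (‖ψ y‖₊ : ℝ≥0∞) := by
            rw [← ENNReal.coe_add]; exact ENNReal.coe_le_coe.mpr htri
        _ ≤ (‖ψ y - ψ x‖₊ : ℝ≥0∞) + B := by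
            refine add_le_add (le_of_eq ?_) hfy
            rw [← neg_sub (ψ y) (ψ x), nnnorm_neg]
    have hmem : ∀ h : ℝ, (x + h ∈ Ioc (x - t) (x + t)) ↔ h ∈ Ioc (-t) t := by
      intro h
      simp only [mem_Ioc]
      constructor
      · rintro ⟨h1, h2⟩; constructor <;> linarith
      · rintro ⟨h1, h2⟩; constructor <;> linarith
    calc τ * (f x - B) ≤ volume S * (f x - B) := mul_le_mul_left hSμ _
      _ = ∫⁻ _ in S, (f x - B) ∂volume := by rw [setLIntegral_const, mul_comm]
      _ ≤ ∫⁻ y in S, (‖ψ y - ψ x‖₊ : ℝ≥0∞) ∂volume := setLIntegral_mono' hSm hpw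
      _ ≤ ∫⁻ y in Ioc (x - t) (x + t), (‖ψ y - ψ x‖₊ : ℝ≥0∞) ∂volume :=
          lintegral_mono_set diff_subset
      _ = ∫⁻ h in Ioc (-t) t, (‖ψ (x + h) - ψ x‖₊ : ℝ≥0∞) ∂volume := by
          rw [← lintegral_indicator measurableSet_Ioc, ← lintegral_indicator measurableSet_Ioc]
          rw [← lintegral_add_left_eq_self
            (fun y => (Ioc (x - t) (x + t)).indicator
              (fun y' => ((‖ψ y' - ψ x‖₊ : ℝ≥0∞))) y) x]
          apply lintegral_congr
          intro h
          by_cases hmem' : h ∈ Ioc (-t) t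
          · rw [Set.indicator_of_mem ((hmem h).mpr hmem'), Set.indicator_of_mem hmem']
          · rw [Set.indicator_of_notMem (fun hcon => hmem' ((hmem h).mp hcon)),
              Set.indicator_of_notMem hmem']
  -- integrate over E, swap, and apply Hölder
  have hmain : τ * (∫⁻ x in E, (f x - B)) ≤ (2 * τ) * (Ω * τ ^ c) := by
    have hswap : τ * (∫⁻ x in E, (f x - B))
        ≤ ∫⁻ h in Ioc (-t) t, (∫⁻ x in E, (‖ψ (x + h) - ψ x‖₊ : ℝ≥0∞)) := by
      rw [← lintegral_const_mul τ (f := fun x => f x - B) (hfm.sub measurable_const)]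
      refine le_trans (lintegral_mono fun x => hpt x) (le_of_eq ?_)
      refine lintegral_lintegral_swap ?_
      refine Measurable.aemeasurable ?_
      exact (((hψ.comp (measurable_fst.add measurable_snd)).sub
        (hψ.comp measurable_fst)).nnnorm).coe_nnreal_ennreal
    refine le_trans hswap ?_
    have hbound : ∀ h ∈ Ioc (-t) t,
        (∫⁻ x in E, (‖ψ (x + h) - ψ x‖₊ : ℝ≥0∞)) ≤ Ω * τ ^ c := by
      intro h hh
      have habs : |h| ≤ t := abs_le.mpr ⟨le_of_lt hh.1, hh.2⟩
      have h1 : (∫⁻ x in E, (‖ψ (x + h) - ψ x‖₊ : ℝ≥0∞))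
          = eLpNorm (fun x => ψ (x + h) - ψ x) 1 (volume.restrict E) :=
        by rw [eLpNorm_one_eq_lintegral_enorm]; rfl
      rw [h1]
      have hq1 : (1 : ℝ≥0∞) ≤ q := by rw [hq]; exact ENNReal.one_le_ofReal.mpr hp
      have h2 := eLpNorm_le_eLpNorm_mul_rpow_measure_univ (μ := volume.restrict E) hq1
        (((hψ.comp (measurable_add_const h)).sub hψ).aestronglyMeasurable)
      refine le_trans h2 ?_
      have hexp : 1/(1:ℝ≥0∞).toReal - 1/q.toReal = c := by
        rw [hq, ENNReal.toReal_ofReal (le_of_lt hp0)]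
        simp [hc]
      rw [hexp, Measure.restrict_apply_univ]
      exact mul_le_mul'
        (le_trans (eLpNorm_mono_measure _ Measure.restrict_le_self) (homega h habs))
        (ENNReal.rpow_le_rpow hEμ hc0)
    refine le_trans (setLIntegral_mono' measurableSet_Ioc hbound) ?_
    rw [setLIntegral_const, Real.volume_Ioc]
    have h2t : ENNReal.ofReal (t - -t) = 2 * τ := by
      rw [show t - -t = 2 * t by ring, ENNReal.ofReal_mul (by norm_num : (0:ℝ) ≤ 2), hτ]
      norm_num
    rw [h2t]
    exact le_of_eq (by ring)
  have hI2 : (∫⁻ x in E, (f x - B)) ≤ 2 * (Ω * τ ^ c) := by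
    rw [← ENNReal.mul_le_mul_iff_right hτ0 hτtop]
    refine le_trans hmain (le_of_eq (by ring))
  have I2eq : (∫⁻ x, (f x - B)) = ∫⁻ x in E, (f x - B) := by
    rw [← lintegral_indicator hEm]
    apply lintegral_congr
    intro x
    by_cases hx : x ∈ E
    · rw [Set.indicator_of_mem hx]
    · rw [Set.indicator_of_notMem hx]
      exact tsub_eq_zero_of_le (not_lt.mp hx)
  have hI1 : (∫⁻ u in Ioc (0:ℝ) t, (rearr volume f u - B)) ≤ ∫⁻ x, (f x - B) := by
    have hrm : Measurable (fun u => rearr volume f u - B) :=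
      ((rearr_anti volume f).measurable).sub measurable_const
    rw [my_layercake (volume.restrict (Ioc (0:ℝ) t)) hrm,
        my_layercake volume (g := fun x => f x - B) (hfm.sub measurable_const)]
    refine lintegral_mono (fun s => ?_)
    rw [Measure.restrict_apply (measurableSet_lt measurable_const hrm)]
    have hset1 : {u | ENNReal.ofReal s < rearr volume f u - B}
        = {u | B + ENNReal.ofReal s < rearr volume f u} := by
      ext u; simp only [mem_setOf_eq, lt_tsub_iff_left]
    have hset2 : {x | ENNReal.ofReal s < f x - B} = {x | B + ENNReal.ofReal s < f x} := by
      ext x; simp only [mem_setOf_eq, lt_tsub_iff_left]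
    rw [hset1, hset2]
    exact vol_rearr_gt_le volume f t _
  have hstep1 : rearr2 volume f t - B
      ≤ (∫⁻ u in Ioc (0:ℝ) t, (rearr volume f u - B)) / τ := by
    unfold rearr2
    have hA : (∫⁻ u in Ioc (0:ℝ) t, rearr volume f u)
        ≤ (∫⁻ u in Ioc (0:ℝ) t, (rearr volume f u - B)) + B * τ := by
      calc (∫⁻ u in Ioc (0:ℝ) t, rearr volume f u)
          ≤ ∫⁻ u in Ioc (0:ℝ) t, ((rearr volume f u - B) + B) :=
            lintegral_mono (fun u => le_tsub_add)
        _ = (∫⁻ u in Ioc (0:ℝ) t, (rearr volume f u - B)) + B * volume (Ioc (0:ℝ) t) := by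
            rw [lintegral_add_right _ measurable_const, setLIntegral_const]
        _ = _ := by rw [Real.volume_Ioc, sub_zero, hτ]
    refine le_trans (tsub_le_tsub_right (ENNReal.div_le_div_right hA τ) B) ?_
    rw [ENNReal.add_div]
    have hBτ : B * τ / τ = B := by
      rw [mul_div_assoc, ENNReal.div_self hτ0 hτtop, mul_one]
    rw [hBτ]
    exact tsub_le_iff_right.mpr le_rfl
  calc rearr2 volume f t - B
      ≤ (∫⁻ u in Ioc (0:ℝ) t, (rearr volume f u - B)) / τ := hstep1
    _ ≤ (∫⁻ x, (f x - B)) / τ := ENNReal.div_le_div_right hI1 τ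
    _ = (∫⁻ x in E, (f x - B)) / τ := by rw [I2eq]
    _ ≤ (2 * (Ω * τ ^ c)) / τ := ENNReal.div_le_div_right hI2 τ
    _ = 2 * ENNReal.ofReal (t ^ (-(1/p))) * Ω := by
        have h1 : τ ^ c * τ⁻¹ = τ ^ (-(1/p)) := by
          rw [← ENNReal.rpow_neg_one, ← ENNReal.rpow_add _ _ hτ0 hτtop]
          congr 1
          rw [hc]; ring
        rw [div_eq_mul_inv, ← ENNReal.ofReal_rpow_of_pos ht, ← hτ, ← h1]
        ring
end
end
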